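/- Let Γ be an abelian group and Fr : Γ → Γ a group automorphism such that for every integer k ≥ 1 the endomorphism L_k := Fr^k − id of Γ is surjective. For n ≥ 1 set Γ_n := ker(L_n). Let m, n ≥ 1 with m ∣ n, and define tr^n_m : Γ_n → Γ by tr^n_m(γ) = Σ_{i=0}^{n/m − 1} Fr^{im}(γ). Then: (a) tr^n_m maps Γ_n into Γ_m and is a surjective group homomorphism Γ_n → Γ_m whose kernel is exactly L_m(Γ_n); (b) consequently, precomposition with tr^n_m defines a bijection from the set of group homomorphisms Γ_m → ℂˣ onto the set of group homomorphisms χ : Γ_n → ℂˣ satisfying χ ∘ Fr^m = χ (note Fr^m restricts to an automorphism of Γ_n). -/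

import Mathlib

variable {Γ : Type*} [AddCommGroup Γ]

/-- The subgroup of elements fixed by the `k`-th power of the automorphism `Fr`
(i.e. the kernel of `L_k = Fr^k - id`). -/
def frobFix (Fr : AddAut Γ) (k : ℕ) : AddSubgroup Γ where
  carrier := {γ : Γ | (k • Fr) γ = γ}
  zero_mem' := by simp
  add_mem' := by
    intro a b ha hb
    simp only [Set.mem_setOf_eq] at *
    rw [map_add, ha, hb]
  neg_mem' := by
    intro a ha
    simp only [Set.mem_setOf_eq] at *
    rw [map_neg, ha]

lemma mem_frobFix {Fr : AddAut Γ} {k : ℕ} {γ : Γ} :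
    γ ∈ frobFix Fr k ↔ (k • Fr) γ = γ := Iff.rfl

/-- `m • Fr` restricts to an endomorphism (in fact automorphism) of `Γ_n = ker L_n`. -/
def frobRestrict (Fr : AddAut Γ) (m n : ℕ) : ↥(frobFix Fr n) →+ ↥(frobFix Fr n) :=
  AddMonoidHom.mk'
    (fun γ => ⟨(m • Fr) (γ : Γ), by
      have hγ : (n • Fr) (γ : Γ) = (γ : Γ) := γ.2
      rw [mem_frobFix]
      calc (n • Fr) ((m • Fr) (γ : Γ)) = ((n + m) • Fr) (γ : Γ) := by
            rw [add_nsmul, AddAut.add_apply]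
        _ = ((m + n) • Fr) (γ : Γ) := by rw [Nat.add_comm]
        _ = (m • Fr) ((n • Fr) (γ : Γ)) := by rw [add_nsmul, AddAut.add_apply]
        _ = (m • Fr) (γ : Γ) := by rw [hγ]⟩)
    (fun a b => by
      apply Subtype.ext
      exact map_add (m • Fr) (a : Γ) (b : Γ))

/-- The trace map `γ ↦ Σ_{i=0}^{d-1} Fr^{i·m}(γ)` on `Γ` (with `d = n/m`). -/
def traceMap (Fr : AddAut Γ) (m d : ℕ) : Γ →+ Γ :=
  ∑ i ∈ Finset.range d, AddEquiv.toAddMonoidHom ((i * m) • Fr : AddAut Γ)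

section auxLang
variable (Fr : AddAut Γ)

lemma traceMap_apply' (m d : ℕ) (γ : Γ) :
    traceMap Fr m d γ = ∑ i ∈ Finset.range d, ((i * m) • Fr) γ := by
  simp [traceMap, AddMonoidHom.finset_sum_apply]

lemma pow_apply_pow' (a b : ℕ) (x : Γ) : (a • Fr) ((b • Fr) x) = ((a + b) • Fr) x := by
  rw [add_nsmul, AddAut.add_apply]

lemma traceMap_sub' (m d : ℕ) (x : Γ) :
    traceMap Fr m d ((m • Fr) x - x) = ((d * m) • Fr) x - x := by
  rw [traceMap_apply']
  have h : ∀ i, ((i * m) • Fr) ((m • Fr) x - x)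
      = (((i + 1) * m) • Fr) x - ((i * m) • Fr) x := by
    intro i
    rw [map_sub, pow_apply_pow']
    congr 2
    ring
  simp_rw [h]
  rw [Finset.sum_range_sub (fun i => ((i * m) • Fr) x)]
  simp

lemma sum_shift' (m d : ℕ) (γ : Γ) (hγ : ((d * m) • Fr) γ = γ) :
    ∑ i ∈ Finset.range d, (((i + 1) * m) • Fr) γ
      = ∑ i ∈ Finset.range d, ((i * m) • Fr) γ := by
  have key : (∑ i ∈ Finset.range d, (((i + 1) * m) • Fr) γ) + ((0 * m) • Fr) γ
      = (∑ i ∈ Finset.range d, ((i * m) • Fr) γ) + ((d * m) • Fr) γ := by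
    rw [← Finset.sum_range_succ' (fun i => ((i * m) • Fr) γ) d,
        ← Finset.sum_range_succ (fun i => ((i * m) • Fr) γ) d]
  rw [hγ] at key
  have h0 : ((0 * m) • Fr) γ = γ := by simp
  rw [h0] at key
  exact add_right_cancel key

lemma frm_traceMap' (m d : ℕ) (γ : Γ) (hγ : ((d * m) • Fr) γ = γ) :
    (m • Fr) (traceMap Fr m d γ) = traceMap Fr m d γ := by
  rw [traceMap_apply', map_sum]
  have h : ∀ i, (m • Fr) (((i * m) • Fr) γ) = (((i + 1) * m) • Fr) γ := by
    intro i
    rw [pow_apply_pow']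
    congr 1
    ring
  simp_rw [h]
  exact sum_shift' Fr m d γ hγ

lemma traceMap_frm' (m d : ℕ) (γ : Γ) (hγ : ((d * m) • Fr) γ = γ) :
    traceMap Fr m d ((m • Fr) γ) = traceMap Fr m d γ := by
  rw [traceMap_apply', traceMap_apply']
  have h : ∀ i, ((i * m) • Fr) ((m • Fr) γ) = (((i + 1) * m) • Fr) γ := by
    intro i
    rw [pow_apply_pow']
    congr 1
    ring
  simp_rw [h]
  exact sum_shift' Fr m d γ hγ

end auxLang

/-- Abstract Lang-theorem setting: `Γ` an abelian group, `Fr` an automorphism with all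
`L_k = Fr^k - id` (`k ≥ 1`) surjective, `Γ_k = ker L_k`.  For `m ∣ n`:
(a) the trace `tr^n_m` maps `Γ_n` onto `Γ_m`, is additive, and its kernel on `Γ_n` is
exactly `L_m(Γ_n)`; (b) precomposition with `tr^n_m` is a bijection from `Hom(Γ_m, ℂˣ)`
onto the `Fr^m`-invariant elements of `Hom(Γ_n, ℂˣ)`. -/
theorem trace_base_change_bijection
    (Fr : AddAut Γ)
    (hLang : ∀ k : ℕ, 1 ≤ k → Function.Surjective (fun γ : Γ => (k • Fr) γ - γ))
    (m n : ℕ) (hm : 1 ≤ m) (hn : 1 ≤ n) (hmn : m ∣ n) :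
    (∀ γ ∈ frobFix Fr n, traceMap Fr m (n / m) γ ∈ frobFix Fr m) ∧
    (∀ γ δ : Γ, traceMap Fr m (n / m) (γ + δ) =
      traceMap Fr m (n / m) γ + traceMap Fr m (n / m) δ) ∧
    (∀ δ ∈ frobFix Fr m, ∃ γ ∈ frobFix Fr n, traceMap Fr m (n / m) γ = δ) ∧
    (∀ γ ∈ frobFix Fr n, (traceMap Fr m (n / m) γ = 0 ↔
      ∃ x ∈ frobFix Fr n, (m • Fr) x - x = γ)) ∧
    ∃ T : (↥(frobFix Fr m) →+ Additive ℂˣ) ≃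
        {χ : ↥(frobFix Fr n) →+ Additive ℂˣ //
          ∀ γ : ↥(frobFix Fr n), χ (frobRestrict Fr m n γ) = χ γ},
      ∀ (χ : ↥(frobFix Fr m) →+ Additive ℂˣ) (γ : ↥(frobFix Fr n))
        (δ : ↥(frobFix Fr m)),
        (δ : Γ) = traceMap Fr m (n / m) (γ : Γ) → (T χ).1 γ = χ δ := by
  obtain ⟨d, hd⟩ := hmn
  have hdm : n / m = d := by
    rw [hd]; exact Nat.mul_div_cancel_left d hm
  have hdm' : d * m = n := by rw [hd, mul_comm]
  have hfix : ∀ γ ∈ frobFix Fr n, ((d * m) • Fr) γ = γ := by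
    intro γ h
    rw [hdm']
    exact h
  rw [hdm]
  have hmem : ∀ γ ∈ frobFix Fr n, traceMap Fr m d γ ∈ frobFix Fr m := by
    intro γ hγ
    exact frm_traceMap' Fr m d γ (hfix γ hγ)
  have hsurj : ∀ δ ∈ frobFix Fr m, ∃ γ ∈ frobFix Fr n, traceMap Fr m d γ = δ := by
    intro δ hδ
    obtain ⟨x, hx⟩ := hLang n hn δ
    simp only at hx
    have hδ' : (m • Fr) δ = δ := hδ
    have hnx : (n • Fr) x = δ + x := by
      rw [← hx]; abel
    refine ⟨(m • Fr) x - x, ?_, ?_⟩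
    · show (n • Fr) ((m • Fr) x - x) = (m • Fr) x - x
      rw [map_sub, pow_apply_pow', add_comm n m, ← pow_apply_pow', hnx, map_add, hδ']
      abel
    · rw [traceMap_sub', hdm']
      exact hx
  have hker : ∀ γ ∈ frobFix Fr n, traceMap Fr m d γ = 0 →
      ∃ x ∈ frobFix Fr n, (m • Fr) x - x = γ := by
    intro γ _ h0
    obtain ⟨x, hx⟩ := hLang m hm γ
    simp only at hx
    have h := traceMap_sub' Fr m d x
    rw [hx, h0] at h
    have hxfix : ((d * m) • Fr) x = x := sub_eq_zero.mp h.symm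
    refine ⟨x, ?_, hx⟩
    show (n • Fr) x = x
    rw [← hdm']
    exact hxfix
  have hker' : ∀ γ ∈ frobFix Fr n, (∃ x ∈ frobFix Fr n, (m • Fr) x - x = γ) →
      traceMap Fr m d γ = 0 := by
    rintro γ _ ⟨x, hxmem, rfl⟩
    rw [traceMap_sub']
    rw [sub_eq_zero]
    exact hfix x hxmem
  refine ⟨hmem, fun γ δ => map_add _ _ _, hsurj, fun γ hγ => ⟨hker γ hγ, hker' γ hγ⟩, ?_⟩
  -- the homomorphism T̂ : Γ_n →+ Γ_m
  set T' : ↥(frobFix Fr n) →+ ↥(frobFix Fr m) :=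
    AddMonoidHom.mk' (fun γ => ⟨traceMap Fr m d (γ : Γ), hmem _ γ.2⟩)
      (fun a b => Subtype.ext (map_add (traceMap Fr m d) (a : Γ) (b : Γ))) with hT'
  have hT'val : ∀ γ : ↥(frobFix Fr n), (T' γ : Γ) = traceMap Fr m d (γ : Γ) := fun _ => rfl
  have hT_inv : ∀ γ : ↥(frobFix Fr n), T' (frobRestrict Fr m n γ) = T' γ := by
    intro γ
    apply Subtype.ext
    rw [hT'val, hT'val]
    exact traceMap_frm' Fr m d γ (hfix _ γ.2)
  have hT_surj : Function.Surjective T' := by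
    intro δ
    obtain ⟨γ, hγmem, hγ⟩ := hsurj δ δ.2
    exact ⟨⟨γ, hγmem⟩, Subtype.ext hγ⟩
  have welldef : ∀ (χ : ↥(frobFix Fr n) →+ Additive ℂˣ),
      (∀ γ, χ (frobRestrict Fr m n γ) = χ γ) →
      ∀ γ₁ γ₂, T' γ₁ = T' γ₂ → χ γ₁ = χ γ₂ := by
    intro χ hχ γ₁ γ₂ h
    have h0 : traceMap Fr m d ((γ₁ - γ₂ : ↥(frobFix Fr n)) : Γ) = 0 := by
      have : T' (γ₁ - γ₂) = 0 := by rw [map_sub, h, sub_self]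
      have := congrArg (Subtype.val) this
      rwa [hT'val] at this
    obtain ⟨x, hxmem, hx⟩ := hker _ (γ₁ - γ₂).2 h0
    set X : ↥(frobFix Fr n) := ⟨x, hxmem⟩ with hX
    have hsub : γ₁ - γ₂ = frobRestrict Fr m n X - X := by
      apply Subtype.ext
      push_cast
      have hval : ((frobRestrict Fr m n) X : Γ) = (m • Fr) x := rfl
      rw [hval, hx]
      exact (AddSubgroup.coe_sub _ γ₁ γ₂).symm
    have : χ γ₁ - χ γ₂ = 0 := by
      rw [← map_sub, hsub, map_sub, hχ X, sub_self]
    exact sub_eq_zero.mp this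
  have hg := fun δ => (hT_surj δ).choose_spec
  set g : ↥(frobFix Fr m) → ↥(frobFix Fr n) := fun δ => (hT_surj δ).choose with hgdef
  refine ⟨⟨fun χ => ⟨χ.comp T', fun γ => by
      simp only [AddMonoidHom.comp_apply, hT_inv γ]⟩,
    fun χp => AddMonoidHom.mk' (fun δ => χp.1 (g δ)) (fun a b => ?_), ?_, ?_⟩, ?_⟩
  · rw [← map_add]
    apply welldef χp.1 χp.2
    rw [map_add, hg, hg, hg]
  · intro χ
    ext δ : 1
    exact congrArg χ (hg δ)
  · intro χp
    apply Subtype.ext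
    ext γ : 1
    exact welldef χp.1 χp.2 _ _ (hg (T' γ))
  · intro χ γ δ hδ
    have h : T' γ = δ := Subtype.ext ((hT'val γ).trans hδ.symm)
    show χ (T' γ) = χ δ
    rw [h]
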